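/- Let {P_α : α < κ} be a family of topological directed sets, each with a minimum element, such that each P_α is cosmic (has a countable network of closed sets) and CSBS. Then the Σ-product ∑_α P_α has calibre (ω₁,ω). -/
import Mathlib


open Cardinal Set

/-- A directed set has calibre `(ω₁,ω)` if every uncountable subset contains an
infinite subset which is bounded (has an upper bound). -/
def CalibreO1O (P : Type*) [Preorder P] : Prop :=
  ∀ S : Set P, ¬ S.Countable → ∃ T ⊆ S, T.Infinite ∧ BddAbove T

/-- A family `𝒞` is a network for `X` if whenever `x ∈ U` with `U` open, there
is `C ∈ 𝒞` with `x ∈ C ⊆ U`. -/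
def IsNetwork {X : Type*} [TopologicalSpace X] (𝒞 : Set (Set X)) : Prop :=
  ∀ x : X, ∀ U : Set X, IsOpen U → x ∈ U → ∃ C ∈ 𝒞, x ∈ C ∧ C ⊆ U

/-- A space is cosmic if it has a countable network of closed sets. -/
def Cosmic (X : Type*) [TopologicalSpace X] : Prop :=
  ∃ 𝒞 : Set (Set X), 𝒞.Countable ∧ (∀ C ∈ 𝒞, IsClosed C) ∧ IsNetwork 𝒞

/-- A topological directed set is CSBS if every convergent sequence has a
subsequence which is bounded in the directed set. -/
def CSBS (P : Type*) [Preorder P] [TopologicalSpace P] : Prop :=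
  ∀ (x : ℕ → P) (p : P), Filter.Tendsto x Filter.atTop (nhds p) →
    ∃ φ : ℕ → ℕ, StrictMono φ ∧ BddAbove (Set.range (x ∘ φ))

section Aux

lemma bddAbove_union_of_dir {α : Type*} [Preorder α]
    (hdir : ∀ F : Set α, F.Finite → BddAbove F)
    {s t : Set α} (hs : BddAbove s) (ht : BddAbove t) : BddAbove (s ∪ t) := by
  obtain ⟨a, ha⟩ := hs
  obtain ⟨b, hb⟩ := ht
  obtain ⟨c, hc⟩ := hdir {a, b} ((Set.finite_singleton b).insert a)
  refine ⟨c, fun x hx => ?_⟩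
  rcases hx with h | h
  · exact (ha h).trans (hc (by simp))
  · exact (hb h).trans (hc (by simp))

lemma closure_lemma {X : Type*} (S : Set X) (hS : ¬ S.Countable)
    (B : X → Set (Set X)) (hB : ∀ x, (B x).Countable) :
    ∃ M : Set X, M ⊆ S ∧ M.Countable ∧
      ∀ Φ : Set (Set X), Φ.Finite → Φ ⊆ ⋃ x ∈ M, B x →
        ((S ∩ ⋂₀ Φ).Countable → S ∩ ⋂₀ Φ ⊆ M) ∧
        (¬ (S ∩ ⋂₀ Φ).Countable → (M ∩ ⋂₀ Φ).Infinite) := by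
  classical
  -- the "decision" set for a constraint system Φ
  let D : Set (Set X) → Set X := fun Φ =>
    if h : (S ∩ ⋂₀ Φ).Countable then S ∩ ⋂₀ Φ
    else Subtype.val '' Set.range (Set.Infinite.natEmbedding (S ∩ ⋂₀ Φ) (fun hf => h hf.countable))
  have hDsub : ∀ Φ, D Φ ⊆ S ∩ ⋂₀ Φ := by
    intro Φ
    by_cases h : (S ∩ ⋂₀ Φ).Countable
    · simp only [D, dif_pos h]; exact subset_rfl
    · simp only [D, dif_neg h]
      rintro x ⟨y, -, rfl⟩
      exact y.2
  have hDc : ∀ Φ, (D Φ).Countable := by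
    intro Φ
    by_cases h : (S ∩ ⋂₀ Φ).Countable
    · simp only [D, dif_pos h]; exact h
    · simp only [D, dif_neg h]
      exact (Set.countable_range _).image _
  have hDeq : ∀ Φ, (S ∩ ⋂₀ Φ).Countable → D Φ = S ∩ ⋂₀ Φ := fun Φ h => dif_pos h
  have hDinf : ∀ Φ, ¬ (S ∩ ⋂₀ Φ).Countable → (D Φ).Infinite := by
    intro Φ h
    simp only [D, dif_neg h]
    rw [← Set.range_comp]
    exact Set.infinite_range_of_injective
      (Subtype.val_injective.comp (Function.Embedding.injective _))
  -- one closure step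
  let Step : Set X → Set X := fun A =>
    A ∪ ⋃ Φ ∈ {Φ : Set (Set X) | Φ.Finite ∧ Φ ⊆ ⋃ x ∈ A, B x}, D Φ
  have hStepCount : ∀ A : Set X, A.Countable → (Step A).Countable := by
    intro A hA
    refine hA.union (Set.Countable.biUnion ?_ (fun Φ _ => hDc Φ))
    exact Set.countable_setOf_finite_subset (hA.biUnion (fun x _ => hB x))
  let Mseq : ℕ → Set X := fun n => Nat.rec (∅ : Set X) (fun _ ih => Step ih) n
  have hM0 : Mseq 0 = ∅ := rfl
  have hMsucc : ∀ n, Mseq (n + 1) = Step (Mseq n) := fun n => rfl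
  have hMc : ∀ n, (Mseq n).Countable := by
    intro n
    induction n with
    | zero => exact Set.countable_empty
    | succ n ih => rw [hMsucc]; exact hStepCount _ ih
  have hMS : ∀ n, Mseq n ⊆ S := by
    intro n
    induction n with
    | zero => simp [hM0]
    | succ n ih =>
      rw [hMsucc]
      rintro x (hx | hx)
      · exact ih hx
      · simp only [Set.mem_iUnion] at hx
        obtain ⟨Φ, _, hx⟩ := hx
        exact (hDsub Φ hx).1
  have hMmono : Monotone Mseq := by
    apply monotone_nat_of_le_succ
    intro n
    rw [hMsucc]
    exact Set.subset_union_left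
  refine ⟨⋃ n, Mseq n, Set.iUnion_subset hMS, Set.countable_iUnion hMc, ?_⟩
  intro Φ hΦfin hΦsub
  -- find a stage N capturing Φ
  have : ∀ φ ∈ Φ, ∃ n, φ ∈ ⋃ x ∈ Mseq n, B x := by
    intro φ hφ
    have := hΦsub hφ
    simp only [Set.mem_iUnion, exists_prop] at this ⊢
    obtain ⟨x, hx, hφx⟩ := this
    obtain ⟨n, hn⟩ := hx
    exact ⟨n, x, hn, hφx⟩
  choose nf hnf using this
  have hKfin : (Set.range (fun φ : Φ => nf φ.1 φ.2)).Finite := by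
    have : Finite Φ := hΦfin
    exact Set.finite_range _
  obtain ⟨N, hN⟩ := hKfin.bddAbove
  have hΦsub' : Φ ⊆ ⋃ x ∈ Mseq N, B x := by
    intro φ hφ
    have h1 : nf φ hφ ≤ N := hN ⟨⟨φ, hφ⟩, rfl⟩
    have := hnf φ hφ
    simp only [Set.mem_iUnion, exists_prop] at this ⊢
    obtain ⟨x, hx, hφx⟩ := this
    exact ⟨x, hMmono h1 hx, hφx⟩
  have hDM : D Φ ⊆ ⋃ n, Mseq n := by
    intro x hx
    refine Set.mem_iUnion.mpr ⟨N + 1, ?_⟩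
    rw [hMsucc]
    refine Set.mem_union_right _ ?_
    simp only [Set.mem_iUnion]
    exact ⟨Φ, ⟨hΦfin, hΦsub'⟩, hx⟩
  constructor
  · intro hcnt
    rw [← hDeq Φ hcnt]
    exact hDM
  · intro hcnt
    refine Set.Infinite.mono ?_ (hDinf Φ hcnt)
    exact Set.subset_inter hDM (fun x hx => (hDsub Φ hx).2)

noncomputable def chainAux (step : ℕ → (ℕ → ℕ) → (ℕ → ℕ)) : ℕ → (ℕ → ℕ)
  | 0 => step 0 id
  | (k+1) => (chainAux step k) ∘ (step (k+1) (chainAux step k))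

lemma nat_le_strictMono {g : ℕ → ℕ} (h : StrictMono g) : ∀ n, n ≤ g n := fun _ => h.le_apply

lemma diagonal_csbs {ι : Type*} (P : ι → Type*) [∀ i, PartialOrder (P i)]
    [∀ i, OrderBot (P i)] [∀ i, TopologicalSpace (P i)]
    (hdir : ∀ i, ∀ F : Set (P i), F.Finite → BddAbove F)
    (hcsbs : ∀ i, CSBS (P i))
    (J : Set ι) (hJc : J.Countable) (hJne : J.Nonempty)
    (x : ℕ → ∀ i, P i) (l : ∀ i, P i)
    (h1 : ∀ i ∈ J, Filter.Tendsto (fun n => x n i) Filter.atTop (nhds (l i)))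
    (h2 : ∀ i, i ∉ J → ∀ n, x n i = ⊥) :
    ∃ ψ : ℕ → ℕ, StrictMono ψ ∧ ∀ i, BddAbove (Set.range fun n => x (ψ n) i) := by
  classical
  obtain ⟨f, hf⟩ := hJc.exists_eq_range hJne
  have hfJ : ∀ k, f k ∈ J := fun k => hf ▸ Set.mem_range_self k
  -- the refinement step
  let step : ℕ → (ℕ → ℕ) → (ℕ → ℕ) := fun k g =>
    if h : StrictMono g then
      Classical.choose (hcsbs (f k) (fun n => x (g n) (f k)) (l (f k))
        ((h1 (f k) (hfJ k)).comp h.tendsto_atTop)) else id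
  have step_spec : ∀ (k : ℕ) (g : ℕ → ℕ) (h : StrictMono g),
      StrictMono (step k g) ∧
        BddAbove (Set.range fun n => x (g (step k g n)) (f k)) := by
    intro k g h
    have := Classical.choose_spec (hcsbs (f k) (fun n => x (g n) (f k)) (l (f k))
        ((h1 (f k) (hfJ k)).comp h.tendsto_atTop))
    simp only [step, dif_pos h]
    exact ⟨this.1, this.2⟩
  set G := chainAux step with hG
  have hG0 : G 0 = step 0 id := rfl
  have hGsucc : ∀ k, G (k+1) = (G k) ∘ (step (k+1) (G k)) := fun k => rfl
  -- main invariant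
  have hGmain : ∀ k, StrictMono (G k) ∧
      BddAbove (Set.range fun n => x (G k n) (f k)) := by
    intro k
    induction k with
    | zero =>
      have := step_spec 0 id strictMono_id
      rw [hG0]
      exact ⟨this.1, by simpa using this.2⟩
    | succ k ih =>
      have hs := step_spec (k+1) (G k) ih.1
      rw [hGsucc]
      exact ⟨ih.1.comp hs.1, hs.2⟩
  -- ranges are nested
  have hGrange : ∀ n k, k ≤ n → ∃ h : ℕ → ℕ, G n = (G k) ∘ h := by
    intro n
    induction n with
    | zero =>
      intro k hk
      interval_cases k
      exact ⟨id, rfl⟩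
    | succ n ih =>
      intro k hk
      rcases Nat.lt_or_ge k (n+1) with h | h
      · obtain ⟨h', hh'⟩ := ih k (Nat.lt_succ_iff.mp h)
        exact ⟨h' ∘ (step (n+1) (G n)), by rw [hGsucc, hh']; rfl⟩
      · have : k = n + 1 := le_antisymm hk h
        subst this
        exact ⟨id, rfl⟩
  set ψ : ℕ → ℕ := fun n => G n n with hψ
  have hψmono : StrictMono ψ := by
    apply strictMono_nat_of_lt_succ
    intro n
    have hs := step_spec (n+1) (G n) (hGmain n).1
    have h1' : n < step (n+1) (G n) (n+1) :=
      lt_of_lt_of_le (Nat.lt_succ_self n) (nat_le_strictMono hs.1 (n+1))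
    calc ψ n = G n n := rfl
    _ < G n (step (n+1) (G n) (n+1)) := (hGmain n).1 h1'
    _ = G (n+1) (n+1) := by rw [hGsucc]; rfl
  refine ⟨ψ, hψmono, ?_⟩
  intro i
  by_cases hi : i ∈ J
  · rw [hf] at hi
    obtain ⟨k, rfl⟩ := hi
    have hsub : (Set.range fun n => x (ψ n) (f k)) ⊆
        ((fun n => x (ψ n) (f k)) '' (Set.Iio k)) ∪
        (Set.range fun m => x (G k m) (f k)) := by
      rintro y ⟨n, rfl⟩
      rcases Nat.lt_or_ge n k with h | h
      · exact Or.inl ⟨n, h, rfl⟩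
      · obtain ⟨h', hh'⟩ := hGrange n k h
        refine Or.inr ⟨h' n, ?_⟩
        show x (G k (h' n)) (f k) = x (ψ n) (f k)
        have : ψ n = G k (h' n) := by rw [hψ]; simp only [hh']; rfl
        rw [this]
    refine BddAbove.mono hsub (bddAbove_union_of_dir (hdir (f k)) ?_ (hGmain k).2)
    exact hdir (f k) _ ((Set.finite_Iio k).image _)
  · refine ⟨⊥, ?_⟩
    rintro y ⟨n, rfl⟩
    simp only [h2 i hi (ψ n), le_refl]

end Aux

/-- the Σ-product of a family of cosmic CSBS topological directed
sets (each with a minimum element) has calibre `(ω₁,ω)`. -/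
theorem sigma_product_cosmic_CSBS {ι : Type*} (P : ι → Type*)
    [∀ i, PartialOrder (P i)] [∀ i, OrderBot (P i)] [∀ i, TopologicalSpace (P i)]
    (hdir : ∀ i, ∀ F : Set (P i), F.Finite → BddAbove F)
    (hcos : ∀ i, Cosmic (P i)) (hcsbs : ∀ i, CSBS (P i)) :
    CalibreO1O {p : ∀ i, P i // {i | p i ≠ ⊥}.Countable} := by
  classical
  choose 𝒞 h𝒞c _h𝒞cl h𝒞net using hcos
  intro S hS
  let B : {p : ∀ i, P i // {i | p i ≠ ⊥}.Countable} →
      Set (Set {p : ∀ i, P i // {i | p i ≠ ⊥}.Countable}) :=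
    fun x => ⋃ i ∈ {j | x.1 j ≠ ⊥},
      (fun C => {y : {p : ∀ i, P i // {i | p i ≠ ⊥}.Countable} | y.1 i ∈ C}) '' 𝒞 i
  have hB : ∀ x, (B x).Countable := fun x =>
    Set.Countable.biUnion x.2 (fun i _ => (h𝒞c i).image _)
  obtain ⟨M, hMS, hMc, hMprop⟩ := closure_lemma S hS B hB
  have hSnotM : ¬ (S ⊆ M) := fun h => hS (hMc.mono h)
  obtain ⟨p, hpS, hpM⟩ := Set.not_subset.mp hSnotM
  let J : Set ι := ⋃ x ∈ M, {j | x.1 j ≠ ⊥}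
  have hJc : J.Countable := hMc.biUnion (fun x _ => x.2)
  -- M is infinite
  have hMinf : M.Infinite := by
    have h := (hMprop ∅ Set.finite_empty (Set.empty_subset _)).2
    simp only [Set.sInter_empty, Set.inter_univ] at h
    exact h hS
  -- J is nonempty
  have hJne : J.Nonempty := by
    obtain ⟨a, ha, b, hb, hab⟩ := hMinf.nontrivial
    have hab' : a.1 ≠ b.1 := fun h => hab (Subtype.ext h)
    obtain ⟨i, hi⟩ := Function.ne_iff.mp hab'
    by_cases hai : a.1 i = ⊥
    · have : b.1 i ≠ ⊥ := fun h => hi (hai.trans h.symm)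
      exact ⟨i, Set.mem_biUnion hb this⟩
    · exact ⟨i, Set.mem_biUnion ha hai⟩
  let 𝒩 := ⋃ x ∈ M, B x
  let 𝒟 := {E ∈ 𝒩 | p ∈ E}
  have h𝒩c : 𝒩.Countable := hMc.biUnion (fun x _ => hB x)
  have h𝒟c : 𝒟.Countable := h𝒩c.mono (Set.sep_subset _ _)
  have hmem𝒟 : ∀ i ∈ J, ∀ C ∈ 𝒞 i, p.1 i ∈ C →
      {y : {p : ∀ i, P i // {i | p i ≠ ⊥}.Countable} | y.1 i ∈ C} ∈ 𝒟 := by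
    intro i hi C hC hpC
    obtain ⟨x, hx, hix⟩ := Set.mem_iUnion₂.mp hi
    refine ⟨Set.mem_biUnion hx ?_, hpC⟩
    exact Set.mem_biUnion hix ⟨C, hC, rfl⟩
  have h𝒟ne : 𝒟.Nonempty := by
    obtain ⟨i, hi⟩ := hJne
    obtain ⟨C, hC, hpC, _⟩ := h𝒞net i (p.1 i) Set.univ isOpen_univ (Set.mem_univ _)
    exact ⟨_, hmem𝒟 i hi C hC hpC⟩
  obtain ⟨d, hd⟩ := h𝒟c.exists_eq_range h𝒟ne
  have hdm : ∀ m, d m ∈ 𝒟 := fun m => hd ▸ Set.mem_range_self m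
  have hA : ∀ n : ℕ, (M ∩ ⋂₀ (d '' Set.Iio n)).Infinite := by
    intro n
    have hfin : (d '' Set.Iio n).Finite := (Set.finite_Iio n).image d
    have hsub : d '' Set.Iio n ⊆ 𝒩 := by rintro E ⟨m, _, rfl⟩; exact (hdm m).1
    have hpmem : p ∈ ⋂₀ (d '' Set.Iio n) := by rintro E ⟨m, _, rfl⟩; exact (hdm m).2
    have h12 := hMprop _ hfin hsub
    exact h12.2 (fun hcnt => hpM (h12.1 hcnt ⟨hpS, hpmem⟩))
  obtain ⟨g, hg⟩ := hMc.exists_eq_range hMinf.nonempty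
  have hpick : ∀ n : ℕ, ((M ∩ ⋂₀ (d '' Set.Iio n)) \ (g '' Set.Iio n)).Nonempty :=
    fun n => ((hA n).diff ((Set.finite_Iio n).image g)).nonempty
  let s : ℕ → {p : ∀ i, P i // {i | p i ≠ ⊥}.Countable} := fun n => (hpick n).some
  have hs : ∀ n, s n ∈ (M ∩ ⋂₀ (d '' Set.Iio n)) \ (g '' Set.Iio n) :=
    fun n => (hpick n).some_mem
  have hsM : ∀ n, s n ∈ M := fun n => (hs n).1.1
  have hsupp : ∀ i, i ∉ J → ∀ n, (s n).1 i = ⊥ := by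
    intro i hi n
    by_contra h
    exact hi (Set.mem_biUnion (hsM n) h)
  have hconv : ∀ i ∈ J, Filter.Tendsto (fun n => (s n).1 i) Filter.atTop (nhds (p.1 i)) := by
    intro i hi
    rw [tendsto_atTop_nhds]
    intro U hpU hU
    obtain ⟨C, hC, hpC, hCU⟩ := h𝒞net i (p.1 i) U hU hpU
    have hE := hmem𝒟 i hi C hC hpC
    rw [hd] at hE
    obtain ⟨m, hm⟩ := hE
    refine ⟨m + 1, fun n hn => ?_⟩
    have hsn : s n ∈ d m := (hs n).1.2 (d m) ⟨m, lt_of_lt_of_le (Nat.lt_succ_self m) hn, rfl⟩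
    rw [hm] at hsn
    exact hCU hsn
  obtain ⟨ψ, hψmono, hψbdd⟩ :=
    diagonal_csbs P hdir hcsbs J hJc hJne (fun n => (s n).1) p.1 hconv hsupp
  refine ⟨Set.range (fun n => s (ψ n)), ?_, ?_, ?_⟩
  · rintro t ⟨n, rfl⟩
    exact hMS (hsM (ψ n))
  · -- infinite
    intro hTfin
    let idx : {p : ∀ i, P i // {i | p i ≠ ⊥}.Countable} → ℕ := fun t => sInf {k | g k = t}
    have hidx : ∀ t ∈ M, g (idx t) = t := by
      intro t ht
      rw [hg] at ht
      obtain ⟨k, hk⟩ := ht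
      exact Nat.sInf_mem (⟨k, hk⟩ : {k | g k = t}.Nonempty)
    have hKfin : (idx '' Set.range (fun n => s (ψ n))).Finite := hTfin.image idx
    obtain ⟨N, hN⟩ := hKfin.bddAbove
    have h1' : idx (s (ψ (N + 1))) ≤ N := hN ⟨_, Set.mem_range_self _, rfl⟩
    have h2' : idx (s (ψ (N + 1))) < ψ (N + 1) :=
      lt_of_le_of_lt h1' (lt_of_lt_of_le (Nat.lt_succ_self N) (nat_le_strictMono hψmono (N + 1)))
    exact (hs (ψ (N + 1))).2 ⟨idx (s (ψ (N + 1))), h2', hidx _ (hsM (ψ (N + 1)))⟩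
  · -- bounded
    have hq : ∀ i, ∃ b : P i, ∀ n, (s (ψ n)).1 i ≤ b := by
      intro i
      obtain ⟨b, hb⟩ := hψbdd i
      exact ⟨b, fun n => hb (Set.mem_range_self n)⟩
    choose bb hbb using hq
    have hqsupp : {i | (if i ∈ J then bb i else ⊥) ≠ ⊥}.Countable := by
      refine hJc.mono (fun i hi => ?_)
      by_contra h
      exact hi (if_neg h)
    refine ⟨⟨fun i => if i ∈ J then bb i else ⊥, hqsupp⟩, ?_⟩
    rintro t ⟨n, rfl⟩
    rw [← Subtype.coe_le_coe, Pi.le_def]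
    intro i
    by_cases hi : i ∈ J
    · simpa only [if_pos hi] using hbb i n
    · simp only [if_neg hi]
      rw [hsupp i hi (ψ n)]
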